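/- For F(x,y) as above restricted to the edge x = 1 with 0 ≤ y ≤ 1, we have F(1,y) = (1 − √y)·√(2y² + 1) + (1 − √y)·√(2y² + 1) + (y − 1)·√(4 − y²) ≤ 0. -/

import Mathlib

theorem stmt15 (y : ℝ) (h0 : 0 ≤ y) (h1 : y ≤ 1) :
    (1 - Real.sqrt (1 * y)) * Real.sqrt (2 * 1 ^ 2 + 2 * y ^ 2 - 1) +
      (1 - Real.sqrt y) * Real.sqrt (2 + 2 * y ^ 2 - 1 ^ 2) +
      (y - Real.sqrt 1) * Real.sqrt (2 + 2 * 1 ^ 2 - y ^ 2) =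
      (1 - Real.sqrt y) * Real.sqrt (2 * y ^ 2 + 1) + (1 - Real.sqrt y) * Real.sqrt (2 * y ^ 2 + 1) +
        (y - 1) * Real.sqrt (4 - y ^ 2) ∧
    (1 - Real.sqrt y) * Real.sqrt (2 * y ^ 2 + 1) + (1 - Real.sqrt y) * Real.sqrt (2 * y ^ 2 + 1) +
      (y - 1) * Real.sqrt (4 - y ^ 2) ≤ 0 := by
  have hs := Real.sq_sqrt h0
  set s := Real.sqrt y with hsdef
  have hs0 : 0 ≤ s := Real.sqrt_nonneg y
  have hs1 : s ≤ 1 := by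
    rw [hsdef, show (1:ℝ) = Real.sqrt 1 by simp]
    exact Real.sqrt_le_sqrt h1
  constructor
  · have : Real.sqrt 1 = 1 := Real.sqrt_one
    rw [one_mul, this, ← hsdef]
    ring_nf
  · have key : 2 * (1 - s) * Real.sqrt (2 * y ^ 2 + 1) ≤ (1 - y) * Real.sqrt (4 - y ^ 2) := by
      have e1 : 2 * (1 - s) * Real.sqrt (2 * y ^ 2 + 1)
          = Real.sqrt ((2 * (1 - s)) ^ 2 * (2 * y ^ 2 + 1)) := by
        rw [Real.sqrt_mul (by positivity), Real.sqrt_sq (by linarith)]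
      have e2 : (1 - y) * Real.sqrt (4 - y ^ 2)
          = Real.sqrt ((1 - y) ^ 2 * (4 - y ^ 2)) := by
        rw [Real.sqrt_mul (by positivity), Real.sqrt_sq (by linarith)]
      rw [e1, e2]
      apply Real.sqrt_le_sqrt
      rw [← hs]
      have h2 : 0 ≤ (1 - s) ^ 2 * (s * (1 - s) * (s ^ 4 + 3 * s ^ 3 + 12 * s ^ 2 + 12 * s + 8)) := by
        have : 0 ≤ 1 - s := by linarith
        positivity
      nlinarith [h2]
    nlinarith [key]
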